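/- arXiv:2009.11259 — 2 statements merged into one kernel-verified Lean document; each statement's English description precedes it below -/
import Mathlib

section
/- Let r(y) := 1 + (1/4)(cos(2πy₁) − 2 sin(2πy₁)) sin(2πy₂), let A(y) be the 2×2 diagonal matrix with entries a₁₁(y) = (1 − (1/2) sin(2πy₁) sin(2πy₂))/r(y), a₂₂(y) = (1 + (1/2) sin(2πy₁) sin(2πy₂))/r(y), a₁₂ = a₂₁ = 0, and let v¹¹(y) := −(sin(2πy₂)/(32π²)) cos(2πy₁), v²²(y) := −(sin(2πy₂)/(32π²)) (cos(2πy₁) − 4 sin(2πy₁)), v¹² = v²¹ := 0. For j,k,l ∈ {1,2} define c_j^{kl} := ∫_Y (A(y)e_j) · ∇v^{kl}(y) r(y) dy, where e_j is the j-th standard basis vector and Y = [0,1]². Then c₁¹¹ = c₁²² = −1/(128π), and c_j^{kl} = 0 for every other triple (j,k,l) ∈ {1,2}³. In particular A is a c-bad matrix (some c_j^{kl} ≠ 0). -/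
/-- Partial derivative w.r.t. the first variable. -/
noncomputable def p1 (f : ℝ → ℝ → ℝ) : ℝ → ℝ → ℝ := fun x y => deriv (fun t => f t y) x

/-- Partial derivative w.r.t. the second variable. -/
noncomputable def p2 (f : ℝ → ℝ → ℝ) : ℝ → ℝ → ℝ := fun x y => deriv (fun t => f x t) y

/-- The invariant measure `r`. -/
noncomputable def rr (y₁ y₂ : ℝ) : ℝ :=
  1 + (1/4) * (Real.cos (2 * Real.pi * y₁) - 2 * Real.sin (2 * Real.pi * y₁))
    * Real.sin (2 * Real.pi * y₂)

/-- Entry `a₁₁` of the `c`-bad matrix `A`. -/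
noncomputable def a11 (y₁ y₂ : ℝ) : ℝ :=
  (1 - (1/2) * Real.sin (2 * Real.pi * y₁) * Real.sin (2 * Real.pi * y₂)) / rr y₁ y₂

/-- Entry `a₂₂` of the `c`-bad matrix `A`. -/
noncomputable def a22 (y₁ y₂ : ℝ) : ℝ :=
  (1 + (1/2) * Real.sin (2 * Real.pi * y₁) * Real.sin (2 * Real.pi * y₂)) / rr y₁ y₂

/-- The diagonal entries `a_{jj}` of `A`. -/
noncomputable def adiag : Fin 2 → ℝ → ℝ → ℝ
  | 0 => a11
  | 1 => a22

/-- The `j`-th partial derivative operator. -/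
noncomputable def pdd : Fin 2 → (ℝ → ℝ → ℝ) → ℝ → ℝ → ℝ
  | 0 => p1
  | 1 => p2

/-- The matrix `V = (v^{kl})` of corrector functions. -/
noncomputable def vv : Fin 2 → Fin 2 → ℝ → ℝ → ℝ
  | 0, 0 => fun y₁ y₂ =>
      -(Real.sin (2 * Real.pi * y₂) / (32 * Real.pi ^ 2)) * Real.cos (2 * Real.pi * y₁)
  | 1, 1 => fun y₁ y₂ =>
      -(Real.sin (2 * Real.pi * y₂) / (32 * Real.pi ^ 2))
        * (Real.cos (2 * Real.pi * y₁) - 4 * Real.sin (2 * Real.pi * y₁))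
  | _, _ => fun _ _ => 0

/-- The constants `c_j^{kl} = ∫_Y (A e_j)·∇v^{kl} r`; since `A` is diagonal the integrand is
`a_{jj} ∂_j v^{kl} r`. -/
noncomputable def cc (j k l : Fin 2) : ℝ :=
  ∫ y₁ in (0:ℝ)..1, ∫ y₂ in (0:ℝ)..1,
    adiag j y₁ y₂ * pdd j (vv k l) y₁ y₂ * rr y₁ y₂


section AuxCBad

open Real

private lemma key_int (a b c d e : ℝ) :
    ∫ x in (0:ℝ)..1, (a + b * Real.sin (2*Real.pi*x) + c * Real.sin (2*Real.pi*x)^2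
      + d * Real.cos (2*Real.pi*x) + e * (Real.sin (2*Real.pi*x) * Real.cos (2*Real.pi*x)))
      = a + c/2 := by
  have hpi := Real.pi_ne_zero
  have hF : ∀ x ∈ Set.uIcc (0:ℝ) 1, HasDerivAt
      (fun t => a*t + b*(-Real.cos (2*Real.pi*t)/(2*Real.pi))
        + c*(t/2 - Real.sin (4*Real.pi*t)/(8*Real.pi))
        + d*(Real.sin (2*Real.pi*t)/(2*Real.pi))
        + e*(Real.sin (2*Real.pi*t)^2/(4*Real.pi)))
      (a + b * Real.sin (2*Real.pi*x) + c * Real.sin (2*Real.pi*x)^2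
      + d * Real.cos (2*Real.pi*x) + e * (Real.sin (2*Real.pi*x) * Real.cos (2*Real.pi*x))) x := by
    intro x _
    have hs2 : HasDerivAt (fun t => Real.sin (2*Real.pi*t)) (Real.cos (2*Real.pi*x) * (2*Real.pi)) x := by
      simpa using ((hasDerivAt_id x).const_mul (2*Real.pi)).sin
    have hc2 : HasDerivAt (fun t => Real.cos (2*Real.pi*t)) (-Real.sin (2*Real.pi*x) * (2*Real.pi)) x := by
      simpa using ((hasDerivAt_id x).const_mul (2*Real.pi)).cos
    have hs4 : HasDerivAt (fun t => Real.sin (4*Real.pi*t)) (Real.cos (4*Real.pi*x) * (4*Real.pi)) x := by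
      simpa using ((hasDerivAt_id x).const_mul (4*Real.pi)).sin
    have H := ((((hasDerivAt_id x).const_mul a).add
        ((hc2.neg.div_const (2*Real.pi)).const_mul b)).add
        ((((hasDerivAt_id x).div_const 2).sub (hs4.div_const (8*Real.pi))).const_mul c)).add
        (((hs2.div_const (2*Real.pi)).const_mul d)) |>.add
        (((hs2.pow 2).div_const (4*Real.pi)).const_mul e)
    refine H.congr_deriv ?_
    symm
    have h4 : Real.cos (4*Real.pi*x) = 2*Real.cos (2*Real.pi*x)^2 - 1 := by
      rw [show (4:ℝ)*Real.pi*x = 2*(2*Real.pi*x) by ring, Real.cos_two_mul]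
    have hp := Real.sin_sq_add_cos_sq (2*Real.pi*x)
    rw [h4]
    field_simp
    linear_combination (64*c) * hp
  rw [intervalIntegral.integral_eq_sub_of_hasDerivAt hF
    (by apply Continuous.intervalIntegrable; fun_prop)]
  have h1 : Real.sin (2*Real.pi*1) = 0 := by simpa using Real.sin_two_pi
  have h2 : Real.cos (2*Real.pi*1) = 1 := by simpa using Real.cos_two_pi
  have h3 : Real.sin (4*Real.pi*1) = 0 := by
    rw [show (4:ℝ)*Real.pi*1 = 2*(2*Real.pi) by ring, Real.sin_two_mul, Real.sin_two_pi]; ring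
  have h4 : Real.sin (Real.pi*4) = 0 := by
    rw [mul_comm]; simpa using Real.sin_nat_mul_pi 4
  have h5 : Real.sin (4*Real.pi) = 0 := by simpa using Real.sin_nat_mul_pi 4
  simp [h1, h2, h3, h4, h5]
  ring

private lemma rr_pos (y₁ y₂ : ℝ) : 0 < rr y₁ y₂ := by
  unfold rr
  have h1 := Real.neg_one_le_cos (2*Real.pi*y₁)
  have h2 := Real.cos_le_one (2*Real.pi*y₁)
  have h3 := Real.neg_one_le_sin (2*Real.pi*y₁)
  have h4 := Real.sin_le_one (2*Real.pi*y₁)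
  have h5 := Real.neg_one_le_sin (2*Real.pi*y₂)
  have h6 := Real.sin_le_one (2*Real.pi*y₂)
  set p := Real.cos (2*Real.pi*y₁) - 2*Real.sin (2*Real.pi*y₁) with hp
  set q := Real.sin (2*Real.pi*y₂) with hq
  nlinarith [mul_nonneg (by linarith : (0:ℝ) ≤ p+3) (by linarith : (0:ℝ) ≤ q+1),
    mul_nonneg (by linarith : (0:ℝ) ≤ 3-p) (by linarith : (0:ℝ) ≤ 1-q)]

private lemma p1_v00 (y₁ y₂ : ℝ) : p1 (vv 0 0) y₁ y₂
    = Real.sin (2*Real.pi*y₁) * Real.sin (2*Real.pi*y₂) / (16*Real.pi) := by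
  have h := (((hasDerivAt_id y₁).const_mul (2*Real.pi)).cos).const_mul
    (-(Real.sin (2*Real.pi*y₂) / (32*Real.pi^2)))
  simp only [id_eq] at h
  simp only [p1, vv]
  rw [h.deriv]
  have := Real.pi_ne_zero
  field_simp
  ring

private lemma p2_v00 (y₁ y₂ : ℝ) : p2 (vv 0 0) y₁ y₂
    = -(Real.cos (2*Real.pi*y₁) * Real.cos (2*Real.pi*y₂)) / (16*Real.pi) := by
  have h := (((((hasDerivAt_id y₂).const_mul (2*Real.pi)).sin).div_const (32*Real.pi^2)).neg).mul_const
    (Real.cos (2*Real.pi*y₁))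
  simp only [id_eq, Pi.neg_apply] at h
  simp only [p2, vv]
  rw [h.deriv]
  have := Real.pi_ne_zero
  field_simp
  ring

private lemma p1_v11 (y₁ y₂ : ℝ) : p1 (vv 1 1) y₁ y₂
    = Real.sin (2*Real.pi*y₂) * (Real.sin (2*Real.pi*y₁) + 4*Real.cos (2*Real.pi*y₁)) / (16*Real.pi) := by
  have h := ((((hasDerivAt_id y₁).const_mul (2*Real.pi)).cos).sub
    ((((hasDerivAt_id y₁).const_mul (2*Real.pi)).sin).const_mul 4)).const_mul
    (-(Real.sin (2*Real.pi*y₂) / (32*Real.pi^2)))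
  simp only [id_eq, Pi.sub_apply] at h
  simp only [p1, vv]
  rw [h.deriv]
  have := Real.pi_ne_zero
  field_simp
  ring

private lemma p2_v11 (y₁ y₂ : ℝ) : p2 (vv 1 1) y₁ y₂
    = -(Real.cos (2*Real.pi*y₂) * (Real.cos (2*Real.pi*y₁) - 4*Real.sin (2*Real.pi*y₁))) / (16*Real.pi) := by
  have h := (((((hasDerivAt_id y₂).const_mul (2*Real.pi)).sin).div_const (32*Real.pi^2)).neg).mul_const
    (Real.cos (2*Real.pi*y₁) - 4*Real.sin (2*Real.pi*y₁))
  simp only [id_eq, Pi.neg_apply] at h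
  simp only [p2, vv]
  rw [h.deriv]
  have := Real.pi_ne_zero
  field_simp
  ring

private lemma e000 (y₁ y₂ : ℝ) :
    adiag 0 y₁ y₂ * pdd 0 (vv 0 0) y₁ y₂ * rr y₁ y₂
    = 0 + (Real.sin (2*Real.pi*y₁)/(16*Real.pi)) * Real.sin (2*Real.pi*y₂)
      + (-(Real.sin (2*Real.pi*y₁)^2)/(32*Real.pi)) * Real.sin (2*Real.pi*y₂)^2
      + 0 * Real.cos (2*Real.pi*y₂)
      + 0 * (Real.sin (2*Real.pi*y₂) * Real.cos (2*Real.pi*y₂)) := by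
  simp only [adiag, pdd, p1_v00, a11]
  have h := (rr_pos y₁ y₂).ne'
  have := Real.pi_ne_zero
  field_simp
  ring

private lemma e100 (y₁ y₂ : ℝ) :
    adiag 1 y₁ y₂ * pdd 1 (vv 0 0) y₁ y₂ * rr y₁ y₂
    = 0 + 0 * Real.sin (2*Real.pi*y₂)
      + 0 * Real.sin (2*Real.pi*y₂)^2
      + (-(Real.cos (2*Real.pi*y₁))/(16*Real.pi)) * Real.cos (2*Real.pi*y₂)
      + (-(Real.sin (2*Real.pi*y₁) * Real.cos (2*Real.pi*y₁))/(32*Real.pi))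
        * (Real.sin (2*Real.pi*y₂) * Real.cos (2*Real.pi*y₂)) := by
  simp only [adiag, pdd, p2_v00, a22]
  have h := (rr_pos y₁ y₂).ne'
  have := Real.pi_ne_zero
  field_simp
  ring

private lemma e011 (y₁ y₂ : ℝ) :
    adiag 0 y₁ y₂ * pdd 0 (vv 1 1) y₁ y₂ * rr y₁ y₂
    = 0 + ((Real.sin (2*Real.pi*y₁) + 4*Real.cos (2*Real.pi*y₁))/(16*Real.pi)) * Real.sin (2*Real.pi*y₂)
      + (-(Real.sin (2*Real.pi*y₁) * (Real.sin (2*Real.pi*y₁) + 4*Real.cos (2*Real.pi*y₁)))/(32*Real.pi))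
        * Real.sin (2*Real.pi*y₂)^2
      + 0 * Real.cos (2*Real.pi*y₂)
      + 0 * (Real.sin (2*Real.pi*y₂) * Real.cos (2*Real.pi*y₂)) := by
  simp only [adiag, pdd, p1_v11, a11]
  have h := (rr_pos y₁ y₂).ne'
  have := Real.pi_ne_zero
  field_simp
  ring

private lemma e111 (y₁ y₂ : ℝ) :
    adiag 1 y₁ y₂ * pdd 1 (vv 1 1) y₁ y₂ * rr y₁ y₂
    = 0 + 0 * Real.sin (2*Real.pi*y₂)
      + 0 * Real.sin (2*Real.pi*y₂)^2
      + (-(Real.cos (2*Real.pi*y₁) - 4*Real.sin (2*Real.pi*y₁))/(16*Real.pi)) * Real.cos (2*Real.pi*y₂)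
      + (-(Real.sin (2*Real.pi*y₁) * (Real.cos (2*Real.pi*y₁) - 4*Real.sin (2*Real.pi*y₁)))/(32*Real.pi))
        * (Real.sin (2*Real.pi*y₂) * Real.cos (2*Real.pi*y₂)) := by
  simp only [adiag, pdd, p2_v11, a22]
  have h := (rr_pos y₁ y₂).ne'
  have := Real.pi_ne_zero
  field_simp
  ring

private lemma cc000 : cc 0 0 0 = -1 / (128 * Real.pi) := by
  have hpi := Real.pi_ne_zero
  unfold cc
  simp only [e000, key_int]
  have e2 : ∀ y₁ : ℝ, 0 + -(Real.sin (2*Real.pi*y₁)^2)/(32*Real.pi)/2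
      = 0 + 0 * Real.sin (2*Real.pi*y₁) + (-1/(64*Real.pi)) * Real.sin (2*Real.pi*y₁)^2
        + 0 * Real.cos (2*Real.pi*y₁)
        + 0 * (Real.sin (2*Real.pi*y₁) * Real.cos (2*Real.pi*y₁)) := by
    intro y₁; field_simp; ring_nf
  simp only [e2, key_int]
  field_simp
  ring

private lemma cc011 : cc 0 1 1 = -1 / (128 * Real.pi) := by
  have hpi := Real.pi_ne_zero
  unfold cc
  simp only [e011, key_int]
  have e2 : ∀ y₁ : ℝ, 0 + -(Real.sin (2*Real.pi*y₁) * (Real.sin (2*Real.pi*y₁)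
        + 4*Real.cos (2*Real.pi*y₁)))/(32*Real.pi)/2
      = 0 + 0 * Real.sin (2*Real.pi*y₁) + (-1/(64*Real.pi)) * Real.sin (2*Real.pi*y₁)^2
        + 0 * Real.cos (2*Real.pi*y₁)
        + (-1/(16*Real.pi)) * (Real.sin (2*Real.pi*y₁) * Real.cos (2*Real.pi*y₁)) := by
    intro y₁; field_simp; ring
  simp only [e2, key_int]
  field_simp
  ring

private lemma cc100 : cc 1 0 0 = 0 := by
  unfold cc
  simp only [e100, key_int]
  simp

private lemma cc111 : cc 1 1 1 = 0 := by
  unfold cc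
  simp only [e111, key_int]
  simp

private lemma cc_zero_corrector (j k l : Fin 2) (h : vv k l = fun _ _ => 0) : cc j k l = 0 := by
  have hp : ∀ y₁ y₂ : ℝ, pdd j (vv k l) y₁ y₂ = 0 := by
    intro y₁ y₂; fin_cases j <;> simp [pdd, p1, p2, h]
  simp [cc, hp]

end AuxCBad

/-- `c₁¹¹ = c₁²² = −1/(128π)`, all other `c_j^{kl}` vanish; in particular `A` is `c`-bad. -/
theorem explicit_c_bad_matrix :
    cc 0 0 0 = -1 / (128 * Real.pi) ∧
    cc 0 1 1 = -1 / (128 * Real.pi) ∧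
    (∀ j k l : Fin 2, ¬(j = 0 ∧ k = l) → cc j k l = 0) ∧
    (∃ j k l : Fin 2, cc j k l ≠ 0) := by
  have hne : cc 0 0 0 ≠ 0 := by
    rw [cc000]
    have h : -1 / (128 * Real.pi) < 0 :=
      div_neg_of_neg_of_pos (by norm_num) (by positivity)
    exact ne_of_lt h
  refine ⟨cc000, cc011, ?_, ⟨0, 0, 0, hne⟩⟩
  intro j k l h
  fin_cases j <;> fin_cases k <;> fin_cases l
  · exact absurd ⟨rfl, rfl⟩ h
  · exact cc_zero_corrector _ _ _ rfl
  · exact cc_zero_corrector _ _ _ rfl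
  · exact absurd ⟨rfl, rfl⟩ h
  · exact cc100
  · exact cc_zero_corrector _ _ _ rfl
  · exact cc_zero_corrector _ _ _ rfl
  · exact cc111
end

section
/- Let n ≥ 1, Ω ⊆ ℝⁿ open, ε > 0. Let A : ℝⁿ → ℝ^{n×n} have symmetric values with entries a_{ij}. Suppose: u : Ω → ℝ is five times continuously differentiable; for each k,l, v^{kl} : ℝⁿ → ℝ is continuously differentiable; constants c_j^{kl} ∈ ℝ are given for j,k,l ∈ {1,…,n}; for each j,k,l, χ^{jkl} : ℝⁿ → ℝ is twice continuously differentiable with −A(y):D²χ^{jkl}(y) = (A(y)e_j)·∇v^{kl}(y) − c_j^{kl} for all y ∈ ℝⁿ; wᵋ : Ω → ℝ is twice differentiable with −A(x/ε):D²wᵋ(x) = ∑_{i,j,k,l=1}^{n} a_{ij}(x/ε) ∂_i v^{kl}(x/ε) ∂³_{jkl}u(x) on Ω; zᵋ : Ω → ℝ is twice differentiable with −A(x/ε):D²zᵋ(x) = −h(x) on Ω, where h := ∑_{j,k,l=1}^{n} c_j^{kl} ∂³_{jkl}u; and θ_χᵋ : Ω → ℝ is twice differentiable with A(x/ε):D²θ_χᵋ(x)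 = 0 on Ω. Define ψᵋ(x) := ε² ( ∑_{j,k,l=1}^{n} χ^{jkl}(x/ε) ∂³_{jkl}u(x) + θ_χᵋ(x) ). Then for every x ∈ Ω: −A(x/ε):D²(wᵋ + zᵋ − ψᵋ)(x) = ε ∑_{d,i,j,k,l=1}^{n} a_{ij}(x/ε) [ 2 ∂_i χ^{dkl}(x/ε) ∂⁴_{djkl}u(x) + ε χ^{dkl}(x/ε) ∂⁵_{dijkl}u(x) ]. -/
/-- The partial derivative `∂_i f` of `f : ℝⁿ → ℝ`, as the Fréchet derivative applied to the
`i`-th standard basis vector. -/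
noncomputable def pd {n : ℕ} (i : Fin n) (f : (Fin n → ℝ) → ℝ) : (Fin n → ℝ) → ℝ :=
  fun x => fderiv ℝ f x (Pi.single i 1)

/-- `f` is twice differentiable on `Ω`: it is differentiable on `Ω` and so are all its first
partial derivatives. -/
def TwiceDiffOn {n : ℕ} (f : (Fin n → ℝ) → ℝ) (Ω : Set (Fin n → ℝ)) : Prop :=
  DifferentiableOn ℝ f Ω ∧ ∀ i : Fin n, DifferentiableOn ℝ (pd i f) Ω

variable {n : ℕ}

lemma pd_congr_nhds {f g : (Fin n → ℝ) → ℝ} {x : Fin n → ℝ} (i : Fin n)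
    (h : f =ᶠ[nhds x] g) : pd i f x = pd i g x := by
  simp only [pd, h.fderiv_eq]

lemma pd_add {f g : (Fin n → ℝ) → ℝ} {x : Fin n → ℝ} (i : Fin n)
    (hf : DifferentiableAt ℝ f x) (hg : DifferentiableAt ℝ g x) :
    pd i (fun y => f y + g y) x = pd i f x + pd i g x := by
  simp only [pd, fderiv_fun_add hf hg, ContinuousLinearMap.add_apply]

lemma pd_sub {f g : (Fin n → ℝ) → ℝ} {x : Fin n → ℝ} (i : Fin n)
    (hf : DifferentiableAt ℝ f x) (hg : DifferentiableAt ℝ g x) :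
    pd i (fun y => f y - g y) x = pd i f x - pd i g x := by
  simp only [pd, fderiv_fun_sub hf hg, ContinuousLinearMap.sub_apply]

lemma pd_const_mul {f : (Fin n → ℝ) → ℝ} {x : Fin n → ℝ} (i : Fin n) (c : ℝ)
    (hf : DifferentiableAt ℝ f x) :
    pd i (fun y => c * f y) x = c * pd i f x := by
  simp only [pd]
  rw [show (fun y => c * f y) = (fun y => c • f y) by simp [smul_eq_mul], fderiv_fun_const_smul hf]
  simp

lemma pd_mul {f g : (Fin n → ℝ) → ℝ} {x : Fin n → ℝ} (i : Fin n)
    (hf : DifferentiableAt ℝ f x) (hg : DifferentiableAt ℝ g x) :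
    pd i (fun y => f y * g y) x = pd i f x * g x + f x * pd i g x := by
  simp only [pd, fderiv_fun_mul hf hg, ContinuousLinearMap.add_apply, ContinuousLinearMap.smul_apply,
    smul_eq_mul]
  ring

lemma pd_sum {α : Type*} (s : Finset α) {f : α → (Fin n → ℝ) → ℝ} {x : Fin n → ℝ} (i : Fin n)
    (hf : ∀ a ∈ s, DifferentiableAt ℝ (f a) x) :
    pd i (fun y => ∑ a ∈ s, f a y) x = ∑ a ∈ s, pd i (f a) x := by
  simp only [pd, fderiv_fun_sum hf, ContinuousLinearMap.coe_sum', Finset.sum_apply]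

lemma diff_comp_smul {f : (Fin n → ℝ) → ℝ} {x : Fin n → ℝ} {ε : ℝ}
    (hf : DifferentiableAt ℝ f (ε⁻¹ • x)) :
    DifferentiableAt ℝ (fun y => f (ε⁻¹ • y)) x := by
  exact hf.comp x ((differentiableAt_id.const_smul ε⁻¹))

lemma pd_comp_smul {f : (Fin n → ℝ) → ℝ} {x : Fin n → ℝ} {ε : ℝ} (i : Fin n)
    (hf : DifferentiableAt ℝ f (ε⁻¹ • x)) :
    pd i (fun y => f (ε⁻¹ • y)) x = ε⁻¹ * pd i f (ε⁻¹ • x) := by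
  have hin : HasFDerivAt (fun y : Fin n → ℝ => ε⁻¹ • y)
      (ε⁻¹ • ContinuousLinearMap.id ℝ (Fin n → ℝ)) x := (hasFDerivAt_id x).const_smul ε⁻¹
  have h2 := (hf.hasFDerivAt.comp x hin).fderiv
  have h3 : fderiv ℝ (fun y => f (ε⁻¹ • y)) x
      = (fderiv ℝ f (ε⁻¹ • x)).comp (ε⁻¹ • ContinuousLinearMap.id ℝ (Fin n → ℝ)) := h2
  simp only [pd, h3, ContinuousLinearMap.coe_comp', Function.comp_apply,
    ContinuousLinearMap.smul_apply, ContinuousLinearMap.coe_id', id_eq, map_smul, smul_eq_mul]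

/-- pd of a `ContDiff (m+1)` function is `ContDiff m`. -/
lemma contDiff_pd {f : (Fin n → ℝ) → ℝ} {m N : WithTop ℕ∞} (hf : ContDiff ℝ N f)
    (hmn : m + 1 ≤ N) (i : Fin n) :
    ContDiff ℝ m (pd i f) := by
  have h1 : ContDiff ℝ m (fderiv ℝ f) := hf.fderiv_right hmn
  exact h1.clm_apply contDiff_const

lemma contDiffOn_pd {f : (Fin n → ℝ) → ℝ} {Ω : Set (Fin n → ℝ)} (hΩ : IsOpen Ω)
    {m N : WithTop ℕ∞} (hf : ContDiffOn ℝ N f Ω) (hmn : m + 1 ≤ N) (i : Fin n) :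
    ContDiffOn ℝ m (pd i f) Ω := by
  have h1 : ContDiffOn ℝ m (fderivWithin ℝ f Ω) Ω :=
    hf.fderivWithin hΩ.uniqueDiffOn hmn
  have h2 : ContDiffOn ℝ m (fun y => fderivWithin ℝ f Ω y (Pi.single i 1)) Ω :=
    h1.clm_apply contDiffOn_const
  exact h2.congr fun y hy => by simp [pd, fderivWithin_of_isOpen hΩ hy]

/-- Clairaut for `pd`. -/
lemma pd_comm {f : (Fin n → ℝ) → ℝ} {x : Fin n → ℝ} (hf : ContDiffAt ℝ 2 f x) (a b : Fin n) :
    pd a (pd b f) x = pd b (pd a f) x := by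
  have hsymm := hf.isSymmSndFDerivAt (by simp)
  have hdf : DifferentiableAt ℝ (fderiv ℝ f) x :=
    (hf.fderiv_right (m := 1) le_rfl).differentiableAt (by norm_num)
  have key : ∀ v : Fin n → ℝ, fderiv ℝ (fun y => fderiv ℝ f y v) x
      = (fderiv ℝ (fderiv ℝ f) x).flip v := by
    intro v
    rw [fderiv_clm_apply hdf (differentiableAt_const v)]
    simp
  have ha := key (Pi.single b 1)
  have hb := key (Pi.single a 1)
  show fderiv ℝ (fun y => fderiv ℝ f y (Pi.single b 1)) x (Pi.single a 1)
      = fderiv ℝ (fun y => fderiv ℝ f y (Pi.single a 1)) x (Pi.single b 1)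
  rw [ha, hb]
  exact hsymm _ _

lemma diffAt_sum3 {f : Fin n → Fin n → Fin n → (Fin n → ℝ) → ℝ} {x : Fin n → ℝ}
    (hf : ∀ a b c, DifferentiableAt ℝ (f a b c) x) :
    DifferentiableAt ℝ (fun y => ∑ a, ∑ b, ∑ c, f a b c y) x := by
  apply DifferentiableAt.fun_sum; intro a _
  apply DifferentiableAt.fun_sum; intro b _
  exact DifferentiableAt.fun_sum fun c _ => hf a b c

lemma pd_sum3 {f : Fin n → Fin n → Fin n → (Fin n → ℝ) → ℝ} {x : Fin n → ℝ} (i : Fin n)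
    (hf : ∀ a b c, DifferentiableAt ℝ (f a b c) x) :
    pd i (fun y => ∑ a, ∑ b, ∑ c, f a b c y) x = ∑ a, ∑ b, ∑ c, pd i (f a b c) x := by
  rw [pd_sum Finset.univ i (fun a _ => by
    apply DifferentiableAt.fun_sum; intro b _; exact DifferentiableAt.fun_sum fun c _ => hf a b c)]
  refine Finset.sum_congr rfl fun a _ => ?_
  rw [pd_sum Finset.univ i (fun b _ => DifferentiableAt.fun_sum fun c _ => hf a b c)]
  exact Finset.sum_congr rfl fun b _ => pd_sum Finset.univ i fun c _ => hf a b c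

/-- First-level expansion: derivative of `∑ χ(x/ε)·F`. -/
lemma pd_sum3_mul {ε : ℝ} {χ F : Fin n → Fin n → Fin n → (Fin n → ℝ) → ℝ} {x : Fin n → ℝ}
    (i : Fin n)
    (hχ : ∀ a b c, DifferentiableAt ℝ (χ a b c) (ε⁻¹ • x))
    (hF : ∀ a b c, DifferentiableAt ℝ (F a b c) x) :
    pd i (fun y => ∑ a, ∑ b, ∑ c, χ a b c (ε⁻¹ • y) * F a b c y) x
      = ∑ a, ∑ b, ∑ c, (ε⁻¹ * pd i (χ a b c) (ε⁻¹ • x) * F a b c x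
          + χ a b c (ε⁻¹ • x) * pd i (F a b c) x) := by
  rw [pd_sum3 i (fun a b c => (diff_comp_smul (hχ a b c)).fun_mul (hF a b c))]
  refine Finset.sum_congr rfl fun a _ => Finset.sum_congr rfl fun b _ =>
    Finset.sum_congr rfl fun c _ => ?_
  rw [pd_mul i (diff_comp_smul (hχ a b c)) (hF a b c), pd_comp_smul i (hχ a b c)]

/-- Second-level expansion. -/
lemma pd_sum3_mul2 {ε r : ℝ} {g χ F H : Fin n → Fin n → Fin n → (Fin n → ℝ) → ℝ}
    {x : Fin n → ℝ} (i : Fin n)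
    (hg : ∀ a b c, DifferentiableAt ℝ (g a b c) (ε⁻¹ • x))
    (hχ : ∀ a b c, DifferentiableAt ℝ (χ a b c) (ε⁻¹ • x))
    (hF : ∀ a b c, DifferentiableAt ℝ (F a b c) x)
    (hH : ∀ a b c, DifferentiableAt ℝ (H a b c) x) :
    pd i (fun y => ∑ a, ∑ b, ∑ c, (r * g a b c (ε⁻¹ • y) * F a b c y
        + χ a b c (ε⁻¹ • y) * H a b c y)) x
      = ∑ a, ∑ b, ∑ c,
          (r * (ε⁻¹ * pd i (g a b c) (ε⁻¹ • x)) * F a b c x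
            + r * g a b c (ε⁻¹ • x) * pd i (F a b c) x
            + ε⁻¹ * pd i (χ a b c) (ε⁻¹ • x) * H a b c x
            + χ a b c (ε⁻¹ • x) * pd i (H a b c) x) := by
  have hgm : ∀ a b c, DifferentiableAt ℝ (fun y => r * g a b c (ε⁻¹ • y)) x :=
    fun a b c => (diff_comp_smul (hg a b c)).const_mul r
  rw [pd_sum3 i (fun a b c =>
    ((hgm a b c).fun_mul (hF a b c)).fun_add ((diff_comp_smul (hχ a b c)).fun_mul (hH a b c)))]
  refine Finset.sum_congr rfl fun a _ => Finset.sum_congr rfl fun b _ =>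
    Finset.sum_congr rfl fun c _ => ?_
  rw [pd_add i ((hgm a b c).fun_mul (hF a b c)) ((diff_comp_smul (hχ a b c)).fun_mul (hH a b c)),
    pd_mul i (hgm a b c) (hF a b c), pd_mul i (diff_comp_smul (hχ a b c)) (hH a b c),
    pd_const_mul i r (diff_comp_smul (hg a b c)), pd_comp_smul i (hg a b c),
    pd_comp_smul i (hχ a b c)]
  ring

lemma pd_comm_on {f : (Fin n → ℝ) → ℝ} {Ω : Set (Fin n → ℝ)} (hΩ : IsOpen Ω)
    (hf : ContDiffOn ℝ 2 f Ω) {x : Fin n → ℝ} (hx : x ∈ Ω) (a b : Fin n) :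
    pd a (pd b f) x = pd b (pd a f) x :=
  pd_comm (hf.contDiffAt (hΩ.mem_nhds hx)) a b

lemma pd_comm_third {f : (Fin n → ℝ) → ℝ} {Ω : Set (Fin n → ℝ)} (hΩ : IsOpen Ω)
    (hf : ContDiffOn ℝ 3 f Ω) {x : Fin n → ℝ} (hx : x ∈ Ω) (i j d : Fin n) :
    pd i (pd j (pd d f)) x = pd d (pd i (pd j f)) x := by
  have h1 : pd i (pd j (pd d f)) x = pd i (pd d (pd j f)) x := by
    apply pd_congr_nhds
    filter_upwards [hΩ.mem_nhds hx] with y hy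
    exact pd_comm_on hΩ (hf.of_le (by norm_num)) hy j d
  rw [h1]
  exact pd_comm_on hΩ (contDiffOn_pd hΩ hf (by norm_num) j) hx i d

lemma sum_rot3 (g : Fin n → Fin n → Fin n → ℝ) :
    ∑ i, ∑ j, ∑ d, g i j d = ∑ d, ∑ i, ∑ j, g i j d := by
  rw [show (∑ i, ∑ j, ∑ d, g i j d) = ∑ i, ∑ d, ∑ j, g i j d from
    Finset.sum_congr rfl fun i _ => Finset.sum_comm, Finset.sum_comm]

lemma sum_rot4 (g : Fin n → Fin n → Fin n → Fin n → ℝ) :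
    ∑ i, ∑ j, ∑ k, ∑ l, g i j k l = ∑ k, ∑ l, ∑ i, ∑ j, g i j k l := by
  rw [sum_rot3 (fun i j k => ∑ l, g i j k l)]
  exact Finset.sum_congr rfl fun k _ => sum_rot3 (fun i j l => g i j k l)

lemma sum_rot5 (g : Fin n → Fin n → Fin n → Fin n → Fin n → ℝ) :
    ∑ i, ∑ j, ∑ d, ∑ k, ∑ l, g i j d k l = ∑ d, ∑ k, ∑ l, ∑ i, ∑ j, g i j d k l := by
  rw [sum_rot3 (fun i j d => ∑ k, ∑ l, g i j d k l)]
  exact Finset.sum_congr rfl fun d _ => sum_rot4 (fun i j k l => g i j d k l)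

lemma sum_in4 (g : Fin n → Fin n → Fin n → Fin n → ℝ) :
    ∑ i, ∑ j, ∑ k, ∑ l, g i j k l = ∑ j, ∑ k, ∑ l, ∑ i, g i j k l := by
  rw [Finset.sum_comm]
  refine Finset.sum_congr rfl fun j _ => ?_
  rw [Finset.sum_comm]
  exact Finset.sum_congr rfl fun k _ => Finset.sum_comm

/-- The identity `−A(x/ε):D²(wᵋ + zᵋ − ψᵋ)
= ε ∑ a_{ij}(x/ε)[2 ∂_i χ^{dkl}(x/ε) ∂⁴_{djkl}u + ε χ^{dkl}(x/ε) ∂⁵_{dijkl}u]` on `Ω`,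
where `ψᵋ = ε²(∑ χ^{jkl}(·/ε) ∂³_{jkl}u + θ_χᵋ)`. -/
theorem corrected_equation_for_w_plus_z {n : ℕ} (hn : 1 ≤ n)
    (Ω : Set (Fin n → ℝ)) (hΩ : IsOpen Ω)
    (ε : ℝ) (hε : 0 < ε)
    (A : (Fin n → ℝ) → Fin n → Fin n → ℝ)
    (hAsymm : ∀ y i j, A y i j = A y j i)
    (u : (Fin n → ℝ) → ℝ)
    (hu : ContDiffOn ℝ 5 u Ω)
    (v : Fin n → Fin n → (Fin n → ℝ) → ℝ)
    (hv : ∀ k l, ContDiff ℝ 1 (v k l))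
    (c : Fin n → Fin n → Fin n → ℝ)
    (χ : Fin n → Fin n → Fin n → (Fin n → ℝ) → ℝ)
    (hχ : ∀ j k l, ContDiff ℝ 2 (χ j k l))
    (hχeq : ∀ j k l, ∀ y : Fin n → ℝ,
      -(∑ i, ∑ i', A y i i' * pd i (pd i' (χ j k l)) y)
        = (∑ i, A y i j * pd i (v k l) y) - c j k l)
    (wε zε θχε : (Fin n → ℝ) → ℝ)
    (hw : TwiceDiffOn wε Ω)
    (hweq : ∀ x ∈ Ω,
      -(∑ i, ∑ j, A (ε⁻¹ • x) i j * pd i (pd j wε) x)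
        = ∑ i, ∑ j, ∑ k, ∑ l,
            A (ε⁻¹ • x) i j * pd i (v k l) (ε⁻¹ • x) * pd j (pd k (pd l u)) x)
    (hz : TwiceDiffOn zε Ω)
    (hzeq : ∀ x ∈ Ω,
      -(∑ i, ∑ j, A (ε⁻¹ • x) i j * pd i (pd j zε) x)
        = -(∑ j, ∑ k, ∑ l, c j k l * pd j (pd k (pd l u)) x))
    (hθχ : TwiceDiffOn θχε Ω)
    (hθχeq : ∀ x ∈ Ω, (∑ i, ∑ j, A (ε⁻¹ • x) i j * pd i (pd j θχε) x) = 0) :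
    ∀ x ∈ Ω,
      -(∑ i, ∑ j, A (ε⁻¹ • x) i j *
          pd i (pd j (fun y => wε y + zε y -
            ε ^ 2 * ((∑ j', ∑ k, ∑ l, χ j' k l (ε⁻¹ • y) * pd j' (pd k (pd l u)) y)
              + θχε y)) ) x)
        = ε * ∑ d, ∑ i, ∑ j, ∑ k, ∑ l, A (ε⁻¹ • x) i j *
            (2 * pd i (χ d k l) (ε⁻¹ • x) * pd d (pd j (pd k (pd l u))) x
              + ε * χ d k l (ε⁻¹ • x) * pd d (pd i (pd j (pd k (pd l u)))) x) := by
  intro x hx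
  have hmem : Ω ∈ nhds x := hΩ.mem_nhds hx
  have hεne : ε ≠ 0 := hε.ne'
  -- smoothness of successive derivatives of u
  have hu4 : ∀ l, ContDiffOn ℝ 4 (pd l u) Ω := fun l => contDiffOn_pd hΩ hu (by norm_num) l
  have hu3 : ∀ k l, ContDiffOn ℝ 3 (pd k (pd l u)) Ω :=
    fun k l => contDiffOn_pd hΩ (hu4 l) (by norm_num) k
  have hT2 : ∀ d k l, ContDiffOn ℝ 2 (pd d (pd k (pd l u))) Ω :=
    fun d k l => contDiffOn_pd hΩ (hu3 k l) (by norm_num) d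
  have hT1 : ∀ j d k l, ContDiffOn ℝ 1 (pd j (pd d (pd k (pd l u)))) Ω :=
    fun j d k l => contDiffOn_pd hΩ (hT2 d k l) (by norm_num) j
  have hTd : ∀ d k l, ∀ y ∈ Ω, DifferentiableAt ℝ (pd d (pd k (pd l u))) y :=
    fun d k l y hy => ((hT2 d k l).differentiableOn (by norm_num)).differentiableAt
      (hΩ.mem_nhds hy)
  have hTjd : ∀ j d k l, ∀ y ∈ Ω, DifferentiableAt ℝ (pd j (pd d (pd k (pd l u)))) y :=
    fun j d k l y hy => ((hT1 j d k l).differentiableOn (by norm_num)).differentiableAt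
      (hΩ.mem_nhds hy)
  -- χ facts
  have hχd : ∀ d k l (z : Fin n → ℝ), DifferentiableAt ℝ (χ d k l) z :=
    fun d k l z => ((hχ d k l).differentiable (by norm_num)).differentiableAt
  have hχ1d : ∀ i d k l (z : Fin n → ℝ), DifferentiableAt ℝ (pd i (χ d k l)) z :=
    fun i d k l z =>
      ((contDiff_pd (m := 1) (hχ d k l) (by norm_num) i).differentiable (by norm_num)).differentiableAt
  -- w z θ facts
  have hwd : ∀ y ∈ Ω, DifferentiableAt ℝ wε y :=
    fun y hy => hw.1.differentiableAt (hΩ.mem_nhds hy)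
  have hzd : ∀ y ∈ Ω, DifferentiableAt ℝ zε y :=
    fun y hy => hz.1.differentiableAt (hΩ.mem_nhds hy)
  have hθd : ∀ y ∈ Ω, DifferentiableAt ℝ θχε y :=
    fun y hy => hθχ.1.differentiableAt (hΩ.mem_nhds hy)
  have hwd1 : ∀ j, ∀ y ∈ Ω, DifferentiableAt ℝ (pd j wε) y :=
    fun j y hy => (hw.2 j).differentiableAt (hΩ.mem_nhds hy)
  have hzd1 : ∀ j, ∀ y ∈ Ω, DifferentiableAt ℝ (pd j zε) y :=
    fun j y hy => (hz.2 j).differentiableAt (hΩ.mem_nhds hy)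
  have hθd1 : ∀ j, ∀ y ∈ Ω, DifferentiableAt ℝ (pd j θχε) y :=
    fun j y hy => (hθχ.2 j).differentiableAt (hΩ.mem_nhds hy)
  -- first derivative of the combination, on Ω
  have hG1 : ∀ (j : Fin n), ∀ y ∈ Ω,
      pd j (fun y => wε y + zε y -
          ε ^ 2 * ((∑ j', ∑ k, ∑ l, χ j' k l (ε⁻¹ • y) * pd j' (pd k (pd l u)) y)
            + θχε y)) y
        = pd j wε y + pd j zε y - ε ^ 2 *
            ((∑ d, ∑ k, ∑ l, (ε⁻¹ * pd j (χ d k l) (ε⁻¹ • y) * pd d (pd k (pd l u)) y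
              + χ d k l (ε⁻¹ • y) * pd j (pd d (pd k (pd l u))) y)) + pd j θχε y) := by
    intro j y hy
    have hSdiff : DifferentiableAt ℝ
        (fun z => ∑ j', ∑ k, ∑ l, χ j' k l (ε⁻¹ • z) * pd j' (pd k (pd l u)) z) y :=
      diffAt_sum3 fun d k l => (diff_comp_smul (hχd d k l _)).fun_mul (hTd d k l y hy)
    rw [pd_sub (f := fun y => wε y + zε y)
        (g := fun y => ε ^ 2 * ((∑ j', ∑ k, ∑ l, χ j' k l (ε⁻¹ • y) * pd j' (pd k (pd l u)) y)
          + θχε y)) j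
        ((hwd y hy).fun_add (hzd y hy))
        ((hSdiff.add (hθd y hy)).const_mul (ε ^ 2)),
      pd_add (f := wε) (g := zε) j (hwd y hy) (hzd y hy),
      pd_const_mul j (ε ^ 2) (hSdiff.fun_add (hθd y hy)),
      pd_add (f := fun z => ∑ j', ∑ k, ∑ l, χ j' k l (ε⁻¹ • z) * pd j' (pd k (pd l u)) z)
        (g := θχε) j hSdiff (hθd y hy),
      pd_sum3_mul j (fun d k l => hχd d k l _) (fun d k l => hTd d k l y hy)]
  -- second derivative at x
  have hG2 : ∀ i j : Fin n,
      pd i (pd j (fun y => wε y + zε y -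
          ε ^ 2 * ((∑ j', ∑ k, ∑ l, χ j' k l (ε⁻¹ • y) * pd j' (pd k (pd l u)) y)
            + θχε y))) x
        = pd i (pd j wε) x + pd i (pd j zε) x - ε ^ 2 *
            ((∑ d, ∑ k, ∑ l,
              (ε⁻¹ * (ε⁻¹ * pd i (pd j (χ d k l)) (ε⁻¹ • x)) * pd d (pd k (pd l u)) x
                + ε⁻¹ * pd j (χ d k l) (ε⁻¹ • x) * pd i (pd d (pd k (pd l u))) x
                + ε⁻¹ * pd i (χ d k l) (ε⁻¹ • x) * pd j (pd d (pd k (pd l u))) x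
                + χ d k l (ε⁻¹ • x) * pd i (pd j (pd d (pd k (pd l u)))) x))
              + pd i (pd j θχε) x) := by
    intro i j
    have hcongr : pd j (fun y => wε y + zε y -
        ε ^ 2 * ((∑ j', ∑ k, ∑ l, χ j' k l (ε⁻¹ • y) * pd j' (pd k (pd l u)) y) + θχε y))
        =ᶠ[nhds x] (fun y => pd j wε y + pd j zε y - ε ^ 2 *
          ((∑ d, ∑ k, ∑ l, (ε⁻¹ * pd j (χ d k l) (ε⁻¹ • y) * pd d (pd k (pd l u)) y
            + χ d k l (ε⁻¹ • y) * pd j (pd d (pd k (pd l u))) y)) + pd j θχε y)) := by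
      filter_upwards [hmem] with y hy
      exact hG1 j y hy
    rw [pd_congr_nhds i hcongr]
    have hSjdiff : DifferentiableAt ℝ
        (fun z => ∑ d, ∑ k, ∑ l, (ε⁻¹ * pd j (χ d k l) (ε⁻¹ • z) * pd d (pd k (pd l u)) z
          + χ d k l (ε⁻¹ • z) * pd j (pd d (pd k (pd l u))) z)) x :=
      diffAt_sum3 fun d k l =>
        (((diff_comp_smul (hχ1d j d k l _)).const_mul ε⁻¹).fun_mul (hTd d k l x hx)).add
          ((diff_comp_smul (hχd d k l _)).fun_mul (hTjd j d k l x hx))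
    rw [pd_sub (f := fun y => pd j wε y + pd j zε y)
        (g := fun y => ε ^ 2 *
          ((∑ d, ∑ k, ∑ l, (ε⁻¹ * pd j (χ d k l) (ε⁻¹ • y) * pd d (pd k (pd l u)) y
            + χ d k l (ε⁻¹ • y) * pd j (pd d (pd k (pd l u))) y)) + pd j θχε y)) i
        ((hwd1 j x hx).fun_add (hzd1 j x hx))
        ((hSjdiff.add (hθd1 j x hx)).const_mul (ε ^ 2)),
      pd_add (f := pd j wε) (g := pd j zε) i (hwd1 j x hx) (hzd1 j x hx),
      pd_const_mul i (ε ^ 2) (hSjdiff.fun_add (hθd1 j x hx)),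
      pd_add (f := fun z => ∑ d, ∑ k, ∑ l, (ε⁻¹ * pd j (χ d k l) (ε⁻¹ • z) * pd d (pd k (pd l u)) z
          + χ d k l (ε⁻¹ • z) * pd j (pd d (pd k (pd l u))) z))
        (g := pd j θχε) i hSjdiff (hθd1 j x hx),
      pd_sum3_mul2 (r := ε⁻¹) i (fun d k l => hχ1d j d k l _) (fun d k l => hχd d k l _)
        (fun d k l => hTd d k l x hx) (fun d k l => hTjd j d k l x hx)]
  -- main computation for the corrector sum
  have hSE : ε ^ 2 * (∑ i, ∑ j, A (ε⁻¹ • x) i j * (∑ d, ∑ k, ∑ l,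
        (ε⁻¹ * (ε⁻¹ * pd i (pd j (χ d k l)) (ε⁻¹ • x)) * pd d (pd k (pd l u)) x
          + ε⁻¹ * pd j (χ d k l) (ε⁻¹ • x) * pd i (pd d (pd k (pd l u))) x
          + ε⁻¹ * pd i (χ d k l) (ε⁻¹ • x) * pd j (pd d (pd k (pd l u))) x
          + χ d k l (ε⁻¹ • x) * pd i (pd j (pd d (pd k (pd l u)))) x)))
      = (∑ d, ∑ k, ∑ l, c d k l * pd d (pd k (pd l u)) x)
        - (∑ i, ∑ j, ∑ k, ∑ l,
            A (ε⁻¹ • x) i j * pd i (v k l) (ε⁻¹ • x) * pd j (pd k (pd l u)) x)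
        + ε * ∑ d, ∑ i, ∑ j, ∑ k, ∑ l, A (ε⁻¹ • x) i j *
            (2 * pd i (χ d k l) (ε⁻¹ • x) * pd d (pd j (pd k (pd l u))) x
              + ε * χ d k l (ε⁻¹ • x) * pd d (pd i (pd j (pd k (pd l u)))) x) := by
    have hstep1 : ε ^ 2 * (∑ i, ∑ j, A (ε⁻¹ • x) i j * (∑ d, ∑ k, ∑ l,
          (ε⁻¹ * (ε⁻¹ * pd i (pd j (χ d k l)) (ε⁻¹ • x)) * pd d (pd k (pd l u)) x
            + ε⁻¹ * pd j (χ d k l) (ε⁻¹ • x) * pd i (pd d (pd k (pd l u))) x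
            + ε⁻¹ * pd i (χ d k l) (ε⁻¹ • x) * pd j (pd d (pd k (pd l u))) x
            + χ d k l (ε⁻¹ • x) * pd i (pd j (pd d (pd k (pd l u)))) x)))
        = ∑ d, ∑ k, ∑ l, ∑ i, ∑ j, ε ^ 2 * (A (ε⁻¹ • x) i j *
          (ε⁻¹ * (ε⁻¹ * pd i (pd j (χ d k l)) (ε⁻¹ • x)) * pd d (pd k (pd l u)) x
            + ε⁻¹ * pd j (χ d k l) (ε⁻¹ • x) * pd i (pd d (pd k (pd l u))) x
            + ε⁻¹ * pd i (χ d k l) (ε⁻¹ • x) * pd j (pd d (pd k (pd l u))) x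
            + χ d k l (ε⁻¹ • x) * pd i (pd j (pd d (pd k (pd l u)))) x)) := by
      simp only [Finset.mul_sum]
      exact sum_rot5 _
    rw [hstep1]
    have hmid : ∀ d k l : Fin n, (∑ i, ∑ j, ε ^ 2 * (A (ε⁻¹ • x) i j *
          (ε⁻¹ * (ε⁻¹ * pd i (pd j (χ d k l)) (ε⁻¹ • x)) * pd d (pd k (pd l u)) x
            + ε⁻¹ * pd j (χ d k l) (ε⁻¹ • x) * pd i (pd d (pd k (pd l u))) x
            + ε⁻¹ * pd i (χ d k l) (ε⁻¹ • x) * pd j (pd d (pd k (pd l u))) x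
            + χ d k l (ε⁻¹ • x) * pd i (pd j (pd d (pd k (pd l u)))) x)))
        = (c d k l - ∑ i, A (ε⁻¹ • x) i d * pd i (v k l) (ε⁻¹ • x))
            * pd d (pd k (pd l u)) x
          + ∑ i, ∑ j, ε * (A (ε⁻¹ • x) i j *
            (2 * pd i (χ d k l) (ε⁻¹ • x) * pd d (pd j (pd k (pd l u))) x
              + ε * χ d k l (ε⁻¹ • x) * pd d (pd i (pd j (pd k (pd l u)))) x)) := by
      intro d k l
      have hD4 : ∀ j : Fin n,
          pd j (pd d (pd k (pd l u))) x = pd d (pd j (pd k (pd l u))) x :=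
        fun j => pd_comm_on hΩ ((hu3 k l).of_le (by norm_num)) hx j d
      have hD5 : ∀ i j : Fin n, pd i (pd j (pd d (pd k (pd l u)))) x
          = pd d (pd i (pd j (pd k (pd l u)))) x :=
        fun i j => pd_comm_third hΩ (hu3 k l) hx i j d
      have split : ∀ i j : Fin n, ε ^ 2 * (A (ε⁻¹ • x) i j *
          (ε⁻¹ * (ε⁻¹ * pd i (pd j (χ d k l)) (ε⁻¹ • x)) * pd d (pd k (pd l u)) x
            + ε⁻¹ * pd j (χ d k l) (ε⁻¹ • x) * pd i (pd d (pd k (pd l u))) x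
            + ε⁻¹ * pd i (χ d k l) (ε⁻¹ • x) * pd j (pd d (pd k (pd l u))) x
            + χ d k l (ε⁻¹ • x) * pd i (pd j (pd d (pd k (pd l u)))) x))
          = A (ε⁻¹ • x) i j * pd i (pd j (χ d k l)) (ε⁻¹ • x) * pd d (pd k (pd l u)) x
            + ε * (A (ε⁻¹ • x) i j * pd j (χ d k l) (ε⁻¹ • x)
                * pd i (pd d (pd k (pd l u))) x)
            + ε * (A (ε⁻¹ • x) i j * pd i (χ d k l) (ε⁻¹ • x)
                * pd j (pd d (pd k (pd l u))) x)
            + ε ^ 2 * (A (ε⁻¹ • x) i j * χ d k l (ε⁻¹ • x)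
                * pd i (pd j (pd d (pd k (pd l u)))) x) := by
        intro i j
        field_simp
      rw [show (∑ i, ∑ j, ε ^ 2 * (A (ε⁻¹ • x) i j *
          (ε⁻¹ * (ε⁻¹ * pd i (pd j (χ d k l)) (ε⁻¹ • x)) * pd d (pd k (pd l u)) x
            + ε⁻¹ * pd j (χ d k l) (ε⁻¹ • x) * pd i (pd d (pd k (pd l u))) x
            + ε⁻¹ * pd i (χ d k l) (ε⁻¹ • x) * pd j (pd d (pd k (pd l u))) x
            + χ d k l (ε⁻¹ • x) * pd i (pd j (pd d (pd k (pd l u)))) x)))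
        = ∑ i, ∑ j,
          (A (ε⁻¹ • x) i j * pd i (pd j (χ d k l)) (ε⁻¹ • x) * pd d (pd k (pd l u)) x
            + ε * (A (ε⁻¹ • x) i j * pd j (χ d k l) (ε⁻¹ • x)
                * pd i (pd d (pd k (pd l u))) x)
            + ε * (A (ε⁻¹ • x) i j * pd i (χ d k l) (ε⁻¹ • x)
                * pd j (pd d (pd k (pd l u))) x)
            + ε ^ 2 * (A (ε⁻¹ • x) i j * χ d k l (ε⁻¹ • x)
                * pd i (pd j (pd d (pd k (pd l u)))) x)) from
        Finset.sum_congr rfl fun i _ => Finset.sum_congr rfl fun j _ => split i j]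
      simp only [Finset.sum_add_distrib]
      have hc1 : (∑ i, ∑ j, A (ε⁻¹ • x) i j * pd i (pd j (χ d k l)) (ε⁻¹ • x)
            * pd d (pd k (pd l u)) x)
          = (c d k l - ∑ i, A (ε⁻¹ • x) i d * pd i (v k l) (ε⁻¹ • x))
              * pd d (pd k (pd l u)) x := by
        rw [show (∑ i, ∑ j, A (ε⁻¹ • x) i j * pd i (pd j (χ d k l)) (ε⁻¹ • x)
              * pd d (pd k (pd l u)) x)
            = (∑ i, ∑ j, A (ε⁻¹ • x) i j * pd i (pd j (χ d k l)) (ε⁻¹ • x))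
              * pd d (pd k (pd l u)) x by
          simp only [Finset.sum_mul]]
        have h := hχeq d k l (ε⁻¹ • x)
        have h2 : (∑ i, ∑ j, A (ε⁻¹ • x) i j * pd i (pd j (χ d k l)) (ε⁻¹ • x))
            = c d k l - ∑ i, A (ε⁻¹ • x) i d * pd i (v k l) (ε⁻¹ • x) := by
          linarith [h]
        rw [h2]
      have hc2 : (∑ i, ∑ j, ε * (A (ε⁻¹ • x) i j * pd j (χ d k l) (ε⁻¹ • x)
            * pd i (pd d (pd k (pd l u))) x))
          = ∑ i, ∑ j, ε * (A (ε⁻¹ • x) i j * pd i (χ d k l) (ε⁻¹ • x)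
              * pd j (pd d (pd k (pd l u))) x) := by
        rw [Finset.sum_comm]
        exact Finset.sum_congr rfl fun i _ => Finset.sum_congr rfl fun j _ => by
          rw [hAsymm (ε⁻¹ • x) j i]
      rw [hc1, hc2]
      have merge : ∀ i j : Fin n,
          ε * (A (ε⁻¹ • x) i j * pd i (χ d k l) (ε⁻¹ • x) * pd j (pd d (pd k (pd l u))) x)
          + ε * (A (ε⁻¹ • x) i j * pd i (χ d k l) (ε⁻¹ • x) * pd j (pd d (pd k (pd l u))) x)
          + ε ^ 2 * (A (ε⁻¹ • x) i j * χ d k l (ε⁻¹ • x)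
              * pd i (pd j (pd d (pd k (pd l u)))) x)
          = ε * (A (ε⁻¹ • x) i j *
            (2 * pd i (χ d k l) (ε⁻¹ • x) * pd d (pd j (pd k (pd l u))) x
              + ε * χ d k l (ε⁻¹ • x) * pd d (pd i (pd j (pd k (pd l u)))) x)) := by
        intro i j
        rw [← hD4 j, ← hD5 i j]
        ring
      calc (c d k l - ∑ i, A (ε⁻¹ • x) i d * pd i (v k l) (ε⁻¹ • x))
            * pd d (pd k (pd l u)) x
          + (∑ i, ∑ j, ε * (A (ε⁻¹ • x) i j * pd i (χ d k l) (ε⁻¹ • x)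
              * pd j (pd d (pd k (pd l u))) x))
          + (∑ i, ∑ j, ε * (A (ε⁻¹ • x) i j * pd i (χ d k l) (ε⁻¹ • x)
              * pd j (pd d (pd k (pd l u))) x))
          + (∑ i, ∑ j, ε ^ 2 * (A (ε⁻¹ • x) i j * χ d k l (ε⁻¹ • x)
              * pd i (pd j (pd d (pd k (pd l u)))) x))
          = (c d k l - ∑ i, A (ε⁻¹ • x) i d * pd i (v k l) (ε⁻¹ • x))
              * pd d (pd k (pd l u)) x
            + ∑ i, ∑ j,
              (ε * (A (ε⁻¹ • x) i j * pd i (χ d k l) (ε⁻¹ • x)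
                  * pd j (pd d (pd k (pd l u))) x)
                + ε * (A (ε⁻¹ • x) i j * pd i (χ d k l) (ε⁻¹ • x)
                  * pd j (pd d (pd k (pd l u))) x)
                + ε ^ 2 * (A (ε⁻¹ • x) i j * χ d k l (ε⁻¹ • x)
                  * pd i (pd j (pd d (pd k (pd l u)))) x)) := by
            simp only [Finset.sum_add_distrib]; ring
        _ = (c d k l - ∑ i, A (ε⁻¹ • x) i d * pd i (v k l) (ε⁻¹ • x))
              * pd d (pd k (pd l u)) x
            + ∑ i, ∑ j, ε * (A (ε⁻¹ • x) i j *
              (2 * pd i (χ d k l) (ε⁻¹ • x) * pd d (pd j (pd k (pd l u))) x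
                + ε * χ d k l (ε⁻¹ • x) * pd d (pd i (pd j (pd k (pd l u)))) x)) := by
            exact congrArg _ (Finset.sum_congr rfl fun i _ =>
              Finset.sum_congr rfl fun j _ => merge i j)
    rw [Finset.sum_congr rfl fun d _ => Finset.sum_congr rfl fun k _ =>
      Finset.sum_congr rfl fun l _ => hmid d k l]
    rw [sum_in4 (fun i j k l => A (ε⁻¹ • x) i j * pd i (v k l) (ε⁻¹ • x)
        * pd j (pd k (pd l u)) x)]
    rw [show (ε * ∑ d, ∑ i, ∑ j, ∑ k, ∑ l, A (ε⁻¹ • x) i j *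
        (2 * pd i (χ d k l) (ε⁻¹ • x) * pd d (pd j (pd k (pd l u))) x
          + ε * χ d k l (ε⁻¹ • x) * pd d (pd i (pd j (pd k (pd l u)))) x))
      = ∑ d, ∑ k, ∑ l, ∑ i, ∑ j, ε * (A (ε⁻¹ • x) i j *
        (2 * pd i (χ d k l) (ε⁻¹ • x) * pd d (pd j (pd k (pd l u))) x
          + ε * χ d k l (ε⁻¹ • x) * pd d (pd i (pd j (pd k (pd l u)))) x)) from by
      rw [Finset.mul_sum]
      refine Finset.sum_congr rfl fun d _ => ?_
      rw [sum_rot4 (fun i j k l => A (ε⁻¹ • x) i j *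
        (2 * pd i (χ d k l) (ε⁻¹ • x) * pd d (pd j (pd k (pd l u))) x
          + ε * χ d k l (ε⁻¹ • x) * pd d (pd i (pd j (pd k (pd l u)))) x)),
        Finset.mul_sum]
      refine Finset.sum_congr rfl fun k _ => ?_
      rw [Finset.mul_sum]
      refine Finset.sum_congr rfl fun l _ => ?_
      rw [Finset.mul_sum]
      exact Finset.sum_congr rfl fun i _ => by rw [Finset.mul_sum]]
    simp only [← Finset.sum_sub_distrib, ← Finset.sum_add_distrib]
    refine Finset.sum_congr rfl fun d _ => Finset.sum_congr rfl fun k _ =>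
      Finset.sum_congr rfl fun l _ => ?_
    rw [sub_mul, Finset.sum_mul]
  -- assemble
  have keyL : (∑ i, ∑ j, A (ε⁻¹ • x) i j *
      pd i (pd j (fun y => wε y + zε y -
        ε ^ 2 * ((∑ j', ∑ k, ∑ l, χ j' k l (ε⁻¹ • y) * pd j' (pd k (pd l u)) y)
          + θχε y))) x)
      = (∑ i, ∑ j, A (ε⁻¹ • x) i j * pd i (pd j wε) x)
        + (∑ i, ∑ j, A (ε⁻¹ • x) i j * pd i (pd j zε) x)
        - ε ^ 2 * (∑ i, ∑ j, A (ε⁻¹ • x) i j * (∑ d, ∑ k, ∑ l,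
            (ε⁻¹ * (ε⁻¹ * pd i (pd j (χ d k l)) (ε⁻¹ • x)) * pd d (pd k (pd l u)) x
              + ε⁻¹ * pd j (χ d k l) (ε⁻¹ • x) * pd i (pd d (pd k (pd l u))) x
              + ε⁻¹ * pd i (χ d k l) (ε⁻¹ • x) * pd j (pd d (pd k (pd l u))) x
              + χ d k l (ε⁻¹ • x) * pd i (pd j (pd d (pd k (pd l u)))) x)))
        - ε ^ 2 * (∑ i, ∑ j, A (ε⁻¹ • x) i j * pd i (pd j θχε) x) := by
    rw [show (∑ i, ∑ j, A (ε⁻¹ • x) i j *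
        pd i (pd j (fun y => wε y + zε y -
          ε ^ 2 * ((∑ j', ∑ k, ∑ l, χ j' k l (ε⁻¹ • y) * pd j' (pd k (pd l u)) y)
            + θχε y))) x)
      = ∑ i, ∑ j, (A (ε⁻¹ • x) i j * pd i (pd j wε) x
          + A (ε⁻¹ • x) i j * pd i (pd j zε) x
          - ε ^ 2 * (A (ε⁻¹ • x) i j * (∑ d, ∑ k, ∑ l,
              (ε⁻¹ * (ε⁻¹ * pd i (pd j (χ d k l)) (ε⁻¹ • x)) * pd d (pd k (pd l u)) x
                + ε⁻¹ * pd j (χ d k l) (ε⁻¹ • x) * pd i (pd d (pd k (pd l u))) x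
                + ε⁻¹ * pd i (χ d k l) (ε⁻¹ • x) * pd j (pd d (pd k (pd l u))) x
                + χ d k l (ε⁻¹ • x) * pd i (pd j (pd d (pd k (pd l u)))) x)))
          - ε ^ 2 * (A (ε⁻¹ • x) i j * pd i (pd j θχε) x)) from
      Finset.sum_congr rfl fun i _ => Finset.sum_congr rfl fun j _ => by rw [hG2 i j]; ring]
    simp only [Finset.sum_add_distrib, Finset.sum_sub_distrib, ← Finset.mul_sum]
  rw [keyL, hθχeq x hx]
  linear_combination (hweq x hx) + (hzeq x hx) + hSE
end
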